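/- For α ∈ (0,1) and integers n ≥ 3, ∑_{j=2}^{n-1} 1/((j-1)^{3-3α}(n-j)^α) ≤ C·ῆ(n), where ῆ(n) = n^{-α} if α ∈ (0,2/3), ῆ(n) = n^{-2/3} ln(n+1) if α = 2/3, ῆ(n) = n^{-(2-2α)} if α ∈ (2/3,1), and C = C(α) > 0 is a constant independent of n. -/

import Mathlib

open Real Finset

lemma antitoneOn_rpow_neg (q : ℝ) (hq : 0 ≤ q) (c : ℝ) :
    AntitoneOn (fun x : ℝ => x ^ (-q)) (Set.Icc 1 c) := by
  intro x hx y hy hxy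
  exact Real.rpow_le_rpow_of_nonpos (lt_of_lt_of_le zero_lt_one hx.1) hxy (neg_nonpos.mpr hq)

lemma T_le_integral (q : ℝ) (hq : 0 ≤ q) (n : ℕ) (hn : 1 ≤ n) :
    ∑ k ∈ Icc 1 n, (k : ℝ) ^ (-q) ≤ 1 + ∫ x in (1:ℝ)..(n:ℝ), x ^ (-q) := by
  have h1 : Finset.Icc 1 n = insert 1 (Finset.Icc 2 n) := by
    ext k; simp only [Finset.mem_Icc, Finset.mem_insert]; omega
  have h2 : (1 : ℕ) ∉ Finset.Icc 2 n := by simp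
  rw [h1, Finset.sum_insert h2, Nat.cast_one, Real.one_rpow]
  gcongr
  have key := AntitoneOn.sum_le_integral_Ico (f := fun x : ℝ => x ^ (-q)) hn
      (by rw [Nat.cast_one]; exact antitoneOn_rpow_neg q hq n)
  rw [Nat.cast_one] at key
  refine le_trans (le_of_eq ?_) key
  rw [show Finset.Icc 2 n = (Finset.Ico 1 n).map (addRightEmbedding 1) by
    rw [Finset.map_add_right_Ico, Finset.Ico_add_one_right_eq_Icc], Finset.sum_map]
  rfl

lemma T_lt (q : ℝ) (n : ℕ) (hq : 1 < q) (hn : 1 ≤ n)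
    (h : ∑ k ∈ Icc 1 n, (k : ℝ) ^ (-q) ≤ 1 + ∫ x in (1:ℝ)..(n:ℝ), x ^ (-q)) :
    ∑ k ∈ Icc 1 n, (k : ℝ) ^ (-q) ≤ 1 + 1/(q-1) := by
  have hn1 : (1:ℝ) ≤ (n:ℝ) := by exact_mod_cast hn
  have hInt : (∫ x in (1:ℝ)..(n:ℝ), x ^ (-q)) = ((n:ℝ) ^ (-q+1) - 1 ^ (-q+1)) / (-q+1) := by
    apply integral_rpow
    right
    exact ⟨by intro hc; nlinarith [hc], Set.notMem_uIcc_of_lt zero_lt_one (by linarith)⟩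
  rw [hInt, Real.one_rpow] at h
  have hpow : (0:ℝ) ≤ (n:ℝ) ^ (-q+1) := Real.rpow_nonneg (by linarith) _
  have e : ((n:ℝ) ^ (-q + 1) - 1) / (-q + 1) = (1 - (n:ℝ) ^ (-q+1))/(q-1) := by
    rw [div_eq_div_iff (by linarith) (by linarith)]; ring
  rw [e] at h
  refine h.trans ?_
  gcongr
  · linarith

lemma T_eq (n : ℕ) (hn : 1 ≤ n)
    (h : ∑ k ∈ Icc 1 n, (k : ℝ) ^ (-(1:ℝ)) ≤ 1 + ∫ x in (1:ℝ)..(n:ℝ), x ^ (-(1:ℝ))) :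
    ∑ k ∈ Icc 1 n, (k : ℝ) ^ (-(1:ℝ)) ≤ 1 + Real.log n := by
  have hn1 : (1:ℝ) ≤ (n:ℝ) := by exact_mod_cast hn
  have hInt : (∫ x in (1:ℝ)..(n:ℝ), x ^ (-(1:ℝ))) = Real.log n := by
    rw [show (fun x : ℝ => x ^ (-(1:ℝ))) = fun x : ℝ => x⁻¹ by
      funext x; rw [Real.rpow_neg_one]]
    rw [integral_inv (Set.notMem_uIcc_of_lt zero_lt_one (by linarith)), div_one]
  rw [hInt] at h
  exact h

lemma T_gt (q : ℝ) (n : ℕ) (hq0 : 0 ≤ q) (hq : q < 1) (hn : 1 ≤ n)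
    (h : ∑ k ∈ Icc 1 n, (k : ℝ) ^ (-q) ≤ 1 + ∫ x in (1:ℝ)..(n:ℝ), x ^ (-q)) :
    ∑ k ∈ Icc 1 n, (k : ℝ) ^ (-q) ≤ (1 + 1/(1-q)) * (n:ℝ) ^ (1-q) := by
  have hn1 : (1:ℝ) ≤ (n:ℝ) := by exact_mod_cast hn
  have hInt : (∫ x in (1:ℝ)..(n:ℝ), x ^ (-q)) = ((n:ℝ) ^ (-q+1) - 1 ^ (-q+1)) / (-q+1) := by
    apply integral_rpow
    left; linarith
  rw [hInt, Real.one_rpow] at h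
  rw [show (-q+1 : ℝ) = 1 - q by ring] at h
  have hpow : (1:ℝ) ≤ (n:ℝ) ^ (1-q) := Real.one_le_rpow hn1 (by linarith)
  have h1q : (0:ℝ) < 1 - q := by linarith
  have hd : ((n:ℝ) ^ (1-q) - 1) / (1-q) ≤ (n:ℝ) ^ (1-q) / (1-q) := by gcongr; linarith
  have e2 : (1 + 1/(1-q)) * (n:ℝ) ^ (1-q) = (n:ℝ) ^ (1-q) + (n:ℝ) ^ (1-q) / (1-q) := by
    field_simp
  rw [e2]
  linarith

lemma sum_comp_le (n : ℕ) (s : Finset ℕ) (e : ℕ → ℕ)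
    (he : ∀ x ∈ s, ∀ y ∈ s, e x = e y → x = y)
    (hsub : ∀ j ∈ s, e j ∈ Finset.Icc 1 n) (g : ℕ → ℝ) (hg : ∀ k, 0 ≤ g k) :
    ∑ j ∈ s, g (e j) ≤ ∑ k ∈ Finset.Icc 1 n, g k := by
  rw [← Finset.sum_image he]
  apply Finset.sum_le_sum_of_subset_of_nonneg
  · intro k hk
    obtain ⟨j, hj, rfl⟩ := Finset.mem_image.mp hk
    exact hsub j hj
  · intro k _ _; exact hg k

lemma master (α : ℝ) (h0 : 0 < α) (h1 : α < 1) (n : ℕ) (hn : 3 ≤ n) :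
    ∑ j ∈ Finset.Icc 2 (n - 1),
        1 / (((j : ℝ) - 1) ^ (3 - 3*α) * ((n : ℝ) - j) ^ α) ≤
      3 ^ α * (n:ℝ) ^ (-α) * ∑ k ∈ Finset.Icc 1 n, (k:ℝ) ^ (-(3-3*α))
      + 8 * (n:ℝ) ^ (-(3-3*α)) * ∑ k ∈ Finset.Icc 1 n, (k:ℝ) ^ (-α) := by
  set p : ℝ := 3 - 3*α with hp
  have hp0 : 0 < p := by simp [hp]; linarith
  have hn0 : (0:ℝ) < n := by positivity
  have hnR : (3:ℝ) ≤ (n:ℝ) := by exact_mod_cast hn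
  -- termwise bound
  have key : ∀ j ∈ Finset.Icc 2 (n-1),
      1 / (((j : ℝ) - 1) ^ p * ((n : ℝ) - j) ^ α) ≤
        3 ^ α * (n:ℝ) ^ (-α) * ((j:ℝ) - 1) ^ (-p)
        + 8 * (n:ℝ) ^ (-p) * ((n:ℝ) - j) ^ (-α) := by
    intro j hj
    rw [Finset.mem_Icc] at hj
    have hj2 : 2 ≤ j := hj.1
    have hjn : j ≤ n - 1 := hj.2
    have ha : (1:ℝ) ≤ (j:ℝ) - 1 := by
      have : (2:ℝ) ≤ (j:ℝ) := by exact_mod_cast hj2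
      linarith
    have hb : (1:ℝ) ≤ (n:ℝ) - j := by
      have : (j:ℝ) ≤ (n:ℝ) - 1 := by
        have : (j:ℝ) + 1 ≤ (n:ℝ) := by exact_mod_cast (by omega : j + 1 ≤ n)
        linarith
      linarith
    have ha0 : (0:ℝ) < (j:ℝ) - 1 := by linarith
    have hb0 : (0:ℝ) < (n:ℝ) - j := by linarith
    have hfe : 1 / (((j : ℝ) - 1) ^ p * ((n : ℝ) - j) ^ α)
        = ((j:ℝ) - 1) ^ (-p) * ((n:ℝ) - j) ^ (-α) := by
      rw [Real.rpow_neg ha0.le, Real.rpow_neg hb0.le, one_div, mul_inv]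
    rw [hfe]
    have hA : (0:ℝ) ≤ ((j:ℝ) - 1) ^ (-p) := Real.rpow_nonneg ha0.le _
    have hB : (0:ℝ) ≤ ((n:ℝ) - j) ^ (-α) := Real.rpow_nonneg hb0.le _
    rcases le_or_gt (2*j) (n+1) with hcase | hcase
    · -- n - j ≥ n/3
      have hjc : 2*(j:ℝ) ≤ (n:ℝ) + 1 := by exact_mod_cast hcase
      have hge : (n:ℝ)/3 ≤ (n:ℝ) - j := by linarith
      have hbb : ((n:ℝ) - j) ^ (-α) ≤ ((n:ℝ)/3) ^ (-α) :=
        Real.rpow_le_rpow_of_nonpos (by linarith) hge (by linarith)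
      have hdiv : ((n:ℝ)/3) ^ (-α) = 3 ^ α * (n:ℝ) ^ (-α) := by
        rw [Real.div_rpow hn0.le (by norm_num), Real.rpow_neg (by norm_num : (0:ℝ) ≤ 3)]
        field_simp
      have : ((j:ℝ) - 1) ^ (-p) * ((n:ℝ) - j) ^ (-α)
          ≤ ((j:ℝ) - 1) ^ (-p) * (3 ^ α * (n:ℝ) ^ (-α)) := by
        gcongr
        rw [← hdiv]; exact hbb
      refine this.trans ?_
      have h2 : (0:ℝ) ≤ 8 * (n:ℝ) ^ (-p) * ((n:ℝ) - j) ^ (-α) := by positivity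
      nlinarith [hA, Real.rpow_nonneg hn0.le (-α), Real.rpow_pos_of_pos (by norm_num : (0:ℝ) < 3) α]
    · -- j - 1 ≥ n/2
      have hjc : (n:ℝ) + 2 ≤ 2*(j:ℝ) := by exact_mod_cast (by omega : n + 2 ≤ 2*j)
      have hge : (n:ℝ)/2 ≤ (j:ℝ) - 1 := by linarith
      have haa : ((j:ℝ) - 1) ^ (-p) ≤ ((n:ℝ)/2) ^ (-p) :=
        Real.rpow_le_rpow_of_nonpos (by linarith) hge (by linarith)
      have hdiv : ((n:ℝ)/2) ^ (-p) ≤ 8 * (n:ℝ) ^ (-p) := by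
        rw [Real.div_rpow hn0.le (by norm_num), Real.rpow_neg (by norm_num : (0:ℝ) ≤ 2)]
        rw [div_eq_mul_inv, inv_inv]
        have h2p : (2:ℝ) ^ p ≤ 8 := by
          calc (2:ℝ) ^ p ≤ 2 ^ (3:ℝ) :=
                Real.rpow_le_rpow_of_exponent_le one_le_two (by simp [hp]; linarith)
            _ = 8 := by
                rw [show (3:ℝ) = ((3:ℕ):ℝ) by norm_num, Real.rpow_natCast]; norm_num
        have := Real.rpow_nonneg hn0.le (-p)
        nlinarith
      have : ((j:ℝ) - 1) ^ (-p) * ((n:ℝ) - j) ^ (-α)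
          ≤ (8 * (n:ℝ) ^ (-p)) * ((n:ℝ) - j) ^ (-α) := by
        gcongr
        exact haa.trans hdiv
      refine this.trans ?_
      have h2 : (0:ℝ) ≤ 3 ^ α * (n:ℝ) ^ (-α) * ((j:ℝ) - 1) ^ (-p) := by positivity
      linarith
  refine le_trans (Finset.sum_le_sum key) ?_
  rw [Finset.sum_add_distrib]
  gcongr
  · -- shift sum j ↦ j - 1
    have hpos : (0:ℝ) ≤ 3 ^ α * (n:ℝ) ^ (-α) := by positivity
    rw [← Finset.mul_sum]
    refine mul_le_mul_of_nonneg_left ?_ hpos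
    have hcast : ∀ j ∈ Finset.Icc 2 (n-1), ((j:ℝ) - 1) ^ (-p) = ((j - 1 : ℕ) : ℝ) ^ (-p) := by
      intro j hj
      rw [Finset.mem_Icc] at hj
      congr 1
      have : (1:ℕ) ≤ j := by omega
      push_cast [Nat.cast_sub this]
      ring
    rw [Finset.sum_congr rfl hcast]
    apply sum_comp_le n _ (fun j => j - 1) (g := fun k => (k:ℝ) ^ (-p))
    · intro x hx y hy hxy
      simp only [Finset.mem_Icc] at hx hy
      omega
    · intro j hj
      simp only [Finset.mem_Icc] at hj ⊢
      omega
    · intro k; positivity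
  · have hpos : (0:ℝ) ≤ 8 * (n:ℝ) ^ (-p) := by positivity
    rw [← Finset.mul_sum]
    refine mul_le_mul_of_nonneg_left ?_ hpos
    have hcast : ∀ j ∈ Finset.Icc 2 (n-1), ((n:ℝ) - j) ^ (-α) = ((n - j : ℕ) : ℝ) ^ (-α) := by
      intro j hj
      rw [Finset.mem_Icc] at hj
      congr 1
      have : j ≤ n := by omega
      push_cast [Nat.cast_sub this]
      ring
    rw [Finset.sum_congr rfl hcast]
    apply sum_comp_le n _ (fun j => n - j) (g := fun k => (k:ℝ) ^ (-α))
    · intro x hx y hy hxy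
      simp only [Finset.mem_Icc] at hx hy
      omega
    · intro j hj
      simp only [Finset.mem_Icc] at hj ⊢
      omega
    · intro k; positivity

/-- The majorant `ῆ(n)` depending on the range of `α`. -/
noncomputable def etaTilde (α : ℝ) (n : ℕ) : ℝ :=
  if α < 2/3 then (n : ℝ) ^ (-α)
  else if α = 2/3 then (n : ℝ) ^ (-(2/3 : ℝ)) * Real.log ((n : ℝ) + 1)
  else (n : ℝ) ^ (-(2 - 2*α))

theorem sum_bound_etaTilde (α : ℝ) (h0 : 0 < α) (h1 : α < 1) :
    ∃ C : ℝ, 0 < C ∧ ∀ n : ℕ, 3 ≤ n →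
      ∑ j ∈ Finset.Icc 2 (n - 1),
        1 / (((j : ℝ) - 1) ^ (3 - 3*α) * ((n : ℝ) - j) ^ α) ≤ C * etaTilde α n := by
  have h3α : (0:ℝ) < 3 ^ α := Real.rpow_pos_of_pos (by norm_num) α
  rcases lt_trichotomy α (2/3) with hcase | hcase | hcase
  · -- α < 2/3
    have hK1 : (0:ℝ) < 1 + 1/(2-3*α) := by
      have : (0:ℝ) < 2 - 3*α := by linarith
      have := one_div_pos.mpr this
      linarith
    have hK2 : (0:ℝ) < 1 + 1/(1-α) := by
      have : (0:ℝ) < 1 - α := by linarith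
      have := one_div_pos.mpr this
      linarith
    refine ⟨3^α * (1 + 1/(2-3*α)) + 8 * (1 + 1/(1-α)), by positivity, ?_⟩
    intro n hn
    have hn' : 1 ≤ n := by omega
    have hn0 : (0:ℝ) < n := by positivity
    have hn1 : (1:ℝ) ≤ n := by exact_mod_cast hn'
    have hTp : ∑ k ∈ Icc 1 n, (k:ℝ) ^ (-(3-3*α)) ≤ 1 + 1/(2-3*α) := by
      have := T_lt (3-3*α) n (by linarith) hn' (T_le_integral (3-3*α) (by linarith) n hn')
      rwa [show (3-3*α) - 1 = 2-3*α by ring] at this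
    have hTα : ∑ k ∈ Icc 1 n, (k:ℝ) ^ (-α) ≤ (1 + 1/(1-α)) * (n:ℝ) ^ (1-α) :=
      T_gt α n h0.le h1 hn' (T_le_integral α h0.le n hn')
    have hη : etaTilde α n = (n:ℝ) ^ (-α) := by simp [etaTilde, hcase]
    rw [hη]
    calc ∑ j ∈ Finset.Icc 2 (n - 1),
          1 / (((j : ℝ) - 1) ^ (3 - 3*α) * ((n : ℝ) - j) ^ α)
        ≤ 3 ^ α * (n:ℝ) ^ (-α) * ∑ k ∈ Finset.Icc 1 n, (k:ℝ) ^ (-(3-3*α))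
          + 8 * (n:ℝ) ^ (-(3-3*α)) * ∑ k ∈ Finset.Icc 1 n, (k:ℝ) ^ (-α) :=
          master α h0 h1 n hn
      _ ≤ 3 ^ α * (n:ℝ) ^ (-α) * (1 + 1/(2-3*α))
          + 8 * (n:ℝ) ^ (-(3-3*α)) * ((1 + 1/(1-α)) * (n:ℝ) ^ (1-α)) := by
          gcongr <;> positivity
      _ = 3 ^ α * (1 + 1/(2-3*α)) * (n:ℝ) ^ (-α)
          + 8 * (1 + 1/(1-α)) * (n:ℝ) ^ (-(3-3*α) + (1-α)) := by
          rw [Real.rpow_add hn0]; ring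
      _ ≤ 3 ^ α * (1 + 1/(2-3*α)) * (n:ℝ) ^ (-α)
          + 8 * (1 + 1/(1-α)) * (n:ℝ) ^ (-α) := by
          have hle : (n:ℝ) ^ (-(3-3*α) + (1-α)) ≤ (n:ℝ) ^ (-α) :=
            Real.rpow_le_rpow_of_exponent_le hn1 (by linarith)
          have hc : (0:ℝ) ≤ 8 * (1 + 1/(1-α)) := by linarith
          linarith [mul_le_mul_of_nonneg_left hle hc]
      _ = (3^α * (1 + 1/(2-3*α)) + 8 * (1 + 1/(1-α))) * (n:ℝ) ^ (-α) := by ring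
  · -- α = 2/3
    subst hcase
    refine ⟨38, by norm_num, ?_⟩
    intro n hn
    have hn' : 1 ≤ n := by omega
    have hn0 : (0:ℝ) < n := by positivity
    have hn1 : (1:ℝ) ≤ n := by exact_mod_cast hn'
    have hlog1 : (1:ℝ) ≤ Real.log ((n:ℝ) + 1) := by
      have h4 : (4:ℝ) ≤ (n:ℝ) + 1 := by
        have : (3:ℝ) ≤ (n:ℝ) := by exact_mod_cast hn
        linarith
      have : Real.log 4 ≤ Real.log ((n:ℝ)+1) := Real.log_le_log (by norm_num) h4
      have hl4 : Real.log 4 = 2 * Real.log 2 := by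
        rw [show (4:ℝ) = 2^2 by norm_num, Real.log_pow]; push_cast; ring
      have := Real.log_two_gt_d9
      linarith
    have hlogn : Real.log (n:ℝ) ≤ Real.log ((n:ℝ)+1) := Real.log_le_log hn0 (by linarith)
    have hTp : ∑ k ∈ Icc 1 n, (k:ℝ) ^ (-(3-3*(2/3):ℝ)) ≤ 2 * Real.log ((n:ℝ)+1) := by
      rw [show (3-3*(2/3):ℝ) = 1 by norm_num]
      have := T_eq n hn' (T_le_integral 1 one_pos.le n hn')
      linarith
    have hTα : ∑ k ∈ Icc 1 n, (k:ℝ) ^ (-(2/3:ℝ)) ≤ 4 * (n:ℝ) ^ (1-(2/3:ℝ)) := by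
      have := T_gt (2/3) n (by norm_num) (by norm_num) hn' (T_le_integral (2/3) (by norm_num) n hn')
      rwa [show (1 + 1/(1-(2/3:ℝ))) = 4 by norm_num] at this
    have hη : etaTilde (2/3) n = (n:ℝ) ^ (-(2/3:ℝ)) * Real.log ((n:ℝ)+1) := by
      simp [etaTilde]
    rw [hη]
    have h33 : (3:ℝ) ^ (2/3:ℝ) ≤ 3 := by
      calc (3:ℝ) ^ (2/3:ℝ) ≤ 3 ^ (1:ℝ) :=
            Real.rpow_le_rpow_of_exponent_le (by norm_num) (by norm_num)
        _ = 3 := Real.rpow_one 3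
    have hexp : (n:ℝ) ^ (-(3-3*(2/3):ℝ)) * (n:ℝ) ^ (1-(2/3:ℝ)) = (n:ℝ) ^ (-(2/3:ℝ)) := by
      rw [← Real.rpow_add hn0]; norm_num
    have hpow : (0:ℝ) < (n:ℝ) ^ (-(2/3:ℝ)) := Real.rpow_pos_of_pos hn0 _
    calc ∑ j ∈ Finset.Icc 2 (n - 1),
          1 / (((j : ℝ) - 1) ^ (3 - 3*(2/3)) * ((n : ℝ) - j) ^ (2/3))
        ≤ 3 ^ (2/3:ℝ) * (n:ℝ) ^ (-(2/3:ℝ)) * ∑ k ∈ Finset.Icc 1 n, (k:ℝ) ^ (-(3-3*(2/3):ℝ))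
          + 8 * (n:ℝ) ^ (-(3-3*(2/3):ℝ)) * ∑ k ∈ Finset.Icc 1 n, (k:ℝ) ^ (-(2/3:ℝ)) :=
          master (2/3) (by norm_num) (by norm_num) n hn
      _ ≤ 3 * (n:ℝ) ^ (-(2/3:ℝ)) * (2 * Real.log ((n:ℝ)+1))
          + 8 * (n:ℝ) ^ (-(3-3*(2/3):ℝ)) * (4 * (n:ℝ) ^ (1-(2/3:ℝ))) := by
          gcongr <;> positivity
      _ = 6 * ((n:ℝ) ^ (-(2/3:ℝ)) * Real.log ((n:ℝ)+1))
          + 32 * ((n:ℝ) ^ (-(3-3*(2/3):ℝ)) * (n:ℝ) ^ (1-(2/3:ℝ))) := by ring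
      _ ≤ 6 * ((n:ℝ) ^ (-(2/3:ℝ)) * Real.log ((n:ℝ)+1))
          + 32 * ((n:ℝ) ^ (-(2/3:ℝ)) * Real.log ((n:ℝ)+1)) := by
          rw [hexp]
          gcongr
          exact le_mul_of_one_le_right hpow.le hlog1
      _ = 38 * ((n:ℝ) ^ (-(2/3:ℝ)) * Real.log ((n:ℝ)+1)) := by ring
  · -- 2/3 < α
    have hp0 : (0:ℝ) < 3 - 3*α := by linarith
    have hp1 : (3 - 3*α:ℝ) < 1 := by linarith
    have hK1 : (0:ℝ) < 1 + 1/(1-(3-3*α)) := by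
      have : (0:ℝ) < 1-(3-3*α) := by linarith
      have := one_div_pos.mpr this
      linarith
    have hK2 : (0:ℝ) < 1 + 1/(1-α) := by
      have : (0:ℝ) < 1 - α := by linarith
      have := one_div_pos.mpr this
      linarith
    refine ⟨3^α * (1 + 1/(1-(3-3*α))) + 8 * (1 + 1/(1-α)), by positivity, ?_⟩
    intro n hn
    have hn' : 1 ≤ n := by omega
    have hn0 : (0:ℝ) < n := by positivity
    have hn1 : (1:ℝ) ≤ n := by exact_mod_cast hn'
    have hTp : ∑ k ∈ Icc 1 n, (k:ℝ) ^ (-(3-3*α)) ≤ (1 + 1/(1-(3-3*α))) * (n:ℝ) ^ (1-(3-3*α)) :=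
      T_gt (3-3*α) n hp0.le hp1 hn' (T_le_integral (3-3*α) hp0.le n hn')
    have hTα : ∑ k ∈ Icc 1 n, (k:ℝ) ^ (-α) ≤ (1 + 1/(1-α)) * (n:ℝ) ^ (1-α) :=
      T_gt α n h0.le h1 hn' (T_le_integral α h0.le n hn')
    have hη : etaTilde α n = (n:ℝ) ^ (-(2-2*α)) := by
      rw [etaTilde, if_neg (by linarith), if_neg (by linarith)]
    rw [hη]
    calc ∑ j ∈ Finset.Icc 2 (n - 1),
          1 / (((j : ℝ) - 1) ^ (3 - 3*α) * ((n : ℝ) - j) ^ α)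
        ≤ 3 ^ α * (n:ℝ) ^ (-α) * ∑ k ∈ Finset.Icc 1 n, (k:ℝ) ^ (-(3-3*α))
          + 8 * (n:ℝ) ^ (-(3-3*α)) * ∑ k ∈ Finset.Icc 1 n, (k:ℝ) ^ (-α) :=
          master α h0 h1 n hn
      _ ≤ 3 ^ α * (n:ℝ) ^ (-α) * ((1 + 1/(1-(3-3*α))) * (n:ℝ) ^ (1-(3-3*α)))
          + 8 * (n:ℝ) ^ (-(3-3*α)) * ((1 + 1/(1-α)) * (n:ℝ) ^ (1-α)) := by
          gcongr <;> positivity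
      _ = 3 ^ α * (1 + 1/(1-(3-3*α))) * (n:ℝ) ^ (-α + (1-(3-3*α)))
          + 8 * (1 + 1/(1-α)) * (n:ℝ) ^ (-(3-3*α) + (1-α)) := by
          rw [Real.rpow_add hn0, Real.rpow_add hn0]; ring
      _ = (3^α * (1 + 1/(1-(3-3*α))) + 8 * (1 + 1/(1-α))) * (n:ℝ) ^ (-(2-2*α)) := by
          rw [show (-α + (1-(3-3*α)):ℝ) = -(2-2*α) by ring,
            show (-(3-3*α) + (1-α):ℝ) = -(2-2*α) by ring]
          ring
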